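/- arXiv:1507.01238 — 3 statements merged into one kernel-verified Lean document; each statement's English description precedes it below -/
import Mathlib

section
/- Fix x_j ∈ S_i. If for every residual direction w ∈ W_j^i it holds that max_{x ∈ ∪_{k≠i} X^k} |w^⊤ x| < max_{x ∈ X^i \ {x_j}} |w^⊤ x|, then OMP(X_{-j}, x_j) with ε = 0 produces a subspace-preserving representation of x_j, and it terminates in at most d_i iterations. -/
open scoped RealInnerProductSpace Classical

noncomputable section

namespace SSCOMP

variable {D : ℕ}

noncomputable def ompSelect {ι : Type*} [Fintype ι] [LinearOrder ι] [Nonempty ι]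
    (a : ι → EuclideanSpace ℝ (Fin D)) (q : EuclideanSpace ℝ (Fin D)) : ι :=
  (Finset.univ.filter fun i => ∀ m, |⟪a m, q⟫| ≤ |⟪a i, q⟫|).min' (by
    obtain ⟨i, -, hi⟩ := Finset.exists_max_image (Finset.univ : Finset ι)
      (fun m => |⟪a m, q⟫|) Finset.univ_nonempty
    exact ⟨i, Finset.mem_filter.mpr ⟨Finset.mem_univ i, fun m => hi m (Finset.mem_univ m)⟩⟩)

noncomputable def ompState {ι : Type*} [Fintype ι] [LinearOrder ι]
    (a : ι → EuclideanSpace ℝ (Fin D)) (b : EuclideanSpace ℝ (Fin D)) :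
    ℕ → Finset ι × EuclideanSpace ℝ (Fin D)
  | 0 => (∅, b)
  | k + 1 =>
    let s := ompState a b k
    if s.2 = 0 then s
    else if h : Nonempty ι then
      haveI := h
      let T' : Finset ι := insert (ompSelect a s.2) s.1
      (T', b - (Submodule.orthogonalProjection (Submodule.span ℝ (a '' (T' : Set ι))) b :
        EuclideanSpace ℝ (Fin D)))
    else s

noncomputable def ompSupport {ι : Type*} [Fintype ι] [LinearOrder ι]
    (a : ι → EuclideanSpace ℝ (Fin D)) (b : EuclideanSpace ℝ (Fin D)) (k : ℕ) : Finset ι :=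
  (ompState a b k).1

noncomputable def ompResidual {ι : Type*} [Fintype ι] [LinearOrder ι]
    (a : ι → EuclideanSpace ℝ (Fin D)) (b : EuclideanSpace ℝ (Fin D)) (k : ℕ) :
    EuclideanSpace ℝ (Fin D) :=
  (ompState a b k).2

def IsOMPOutput {ι : Type*} [Fintype ι] [LinearOrder ι]
    (a : ι → EuclideanSpace ℝ (Fin D)) (b : EuclideanSpace ℝ (Fin D)) (kmax : ℕ)
    (c : ι → ℝ) : Prop :=
  (∀ m, c m ≠ 0 → m ∈ ompSupport a b kmax) ∧
  ∀ c' : ι → ℝ, (∀ m, c' m ≠ 0 → m ∈ ompSupport a b kmax) →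
    ‖b - ∑ m, c m • a m‖ ≤ ‖b - ∑ m, c' m • a m‖

/-- Set of normalized nonzero residual directions of OMP(a, b) run with `ε = 0`
and `k_max` large enough. -/
noncomputable def residualDirs {ι : Type*} [Fintype ι] [LinearOrder ι]
    (a : ι → EuclideanSpace ℝ (Fin D)) (b : EuclideanSpace ℝ (Fin D)) :
    Set (EuclideanSpace ℝ (Fin D)) :=
  {w | ∃ k, ompResidual a b k ≠ 0 ∧ w = ‖ompResidual a b k‖⁻¹ • ompResidual a b k}

/-- Coherence between two sets of unit-norm points. -/
noncomputable def coherence (A B : Set (EuclideanSpace ℝ (Fin D))) : ℝ :=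
  sSup {r : ℝ | ∃ u ∈ A, ∃ v ∈ B, r = |⟪u, v⟫|}

/-- Symmetrized convex hull `conv(±A)`. -/
noncomputable def symmHull (A : Set (EuclideanSpace ℝ (Fin D))) :
    Set (EuclideanSpace ℝ (Fin D)) :=
  convexHull ℝ (A ∪ (-A))

/-- Inradius of a convex body: the radius of the largest Euclidean ball
(within the linear span of the body) inscribed in it. -/
noncomputable def inradius (P : Set (EuclideanSpace ℝ (Fin D))) : ℝ :=
  sSup {r : ℝ | 0 ≤ r ∧ ∃ c ∈ Submodule.span ℝ P,
    ∀ y ∈ Submodule.span ℝ P, ‖y - c‖ ≤ r → y ∈ P}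

variable {n N : ℕ}

/-- `X^i`: the set of data points lying in the `i`-th subspace. -/
noncomputable def subX (S : Fin n → Submodule ℝ (EuclideanSpace ℝ (Fin D)))
    (x : Fin N → EuclideanSpace ℝ (Fin D)) (i : Fin n) : Set (EuclideanSpace ℝ (Fin D)) :=
  x '' {m | x m ∈ S i}

/-- `X^i_{-j}`: the set of data points lying in the `i`-th subspace, with `x j` removed. -/
noncomputable def subXmin (S : Fin n → Submodule ℝ (EuclideanSpace ℝ (Fin D)))
    (x : Fin N → EuclideanSpace ℝ (Fin D)) (i : Fin n) (j : Fin N) :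
    Set (EuclideanSpace ℝ (Fin D)) :=
  x '' {m | x m ∈ S i ∧ m ≠ j}

/-- `W_j^i`: the set of OMP residual directions associated with `X^i_{-j}` and `x j`. -/
noncomputable def Wji (S : Fin n → Submodule ℝ (EuclideanSpace ℝ (Fin D)))
    (x : Fin N → EuclideanSpace ℝ (Fin D)) (i : Fin n) (j : Fin N) :
    Set (EuclideanSpace ℝ (Fin D)) :=
  residualDirs (fun m : {m : Fin N // x m ∈ S i ∧ m ≠ j} => x m.1) (x j)

/-- `W^i`: the set of OMP residual directions associated with `X^i`. -/
noncomputable def Wfull (S : Fin n → Submodule ℝ (EuclideanSpace ℝ (Fin D)))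
    (x : Fin N → EuclideanSpace ℝ (Fin D)) (i : Fin n) : Set (EuclideanSpace ℝ (Fin D)) :=
  ⋃ j ∈ {j : Fin N | x j ∈ S i}, Wji S x i j

/-- `r_i := min_{j : x_j ∈ S_i} r(P^i_{-j})`. -/
noncomputable def rMin (S : Fin n → Submodule ℝ (EuclideanSpace ℝ (Fin D)))
    (x : Fin N → EuclideanSpace ℝ (Fin D)) (i : Fin n) : ℝ :=
  sInf {r : ℝ | ∃ j, x j ∈ S i ∧ r = inradius (symmHull (subXmin S x i j))}

/-- Cosine of the principal angle between two subspaces. -/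
noncomputable def cosAngle (Si Sk : Submodule ℝ (EuclideanSpace ℝ (Fin D))) : ℝ :=
  sSup {r : ℝ | ∃ u ∈ Si, ∃ v ∈ Sk, ‖u‖ = 1 ∧ ‖v‖ = 1 ∧ r = ⟪u, v⟫}



lemma ompSelect_max {ι : Type*} [Fintype ι] [LinearOrder ι] [Nonempty ι]
    (a : ι → EuclideanSpace ℝ (Fin D)) (q : EuclideanSpace ℝ (Fin D)) (m : ι) :
    |⟪a m, q⟫| ≤ |⟪a (ompSelect a q), q⟫| := by
  have h := Finset.min'_mem (Finset.univ.filter fun i => ∀ m, |⟪a m, q⟫| ≤ |⟪a i, q⟫|)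
    (by
      obtain ⟨i, -, hi⟩ := Finset.exists_max_image (Finset.univ : Finset ι)
        (fun m => |⟪a m, q⟫|) Finset.univ_nonempty
      exact ⟨i, Finset.mem_filter.mpr ⟨Finset.mem_univ i, fun m => hi m (Finset.mem_univ m)⟩⟩)
  rw [Finset.mem_filter] at h
  exact h.2 m

lemma ompSelect_le {ι : Type*} [Fintype ι] [LinearOrder ι] [Nonempty ι]
    (a : ι → EuclideanSpace ℝ (Fin D)) (q : EuclideanSpace ℝ (Fin D)) (s : ι)
    (hs : ∀ m, |⟪a m, q⟫| ≤ |⟪a s, q⟫|) : ompSelect a q ≤ s :=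
  Finset.min'_le _ _ (Finset.mem_filter.mpr ⟨Finset.mem_univ _, hs⟩)

lemma ompState_succ_zero {ι : Type*} [Fintype ι] [LinearOrder ι]
    (a : ι → EuclideanSpace ℝ (Fin D)) (b : EuclideanSpace ℝ (Fin D)) (k : ℕ)
    (h : (ompState a b k).2 = 0) : ompState a b (k+1) = ompState a b k := by
  rw [ompState]; simp [h]

lemma ompState_succ_ne {ι : Type*} [Fintype ι] [LinearOrder ι] [hne : Nonempty ι]
    (a : ι → EuclideanSpace ℝ (Fin D)) (b : EuclideanSpace ℝ (Fin D)) (k : ℕ)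
    (h : (ompState a b k).2 ≠ 0) :
    ompState a b (k+1) =
      (insert (ompSelect a (ompState a b k).2) (ompState a b k).1,
       b - (Submodule.orthogonalProjection (Submodule.span ℝ
         (a '' ((insert (ompSelect a (ompState a b k).2) (ompState a b k).1 : Finset ι) : Set ι))) b :
         EuclideanSpace ℝ (Fin D))) := by
  rw [ompState]; simp [h, hne]

lemma ompResidual_succ_eq_zero {ι : Type*} [Fintype ι] [LinearOrder ι]
    (a : ι → EuclideanSpace ℝ (Fin D)) (b : EuclideanSpace ℝ (Fin D)) (k : ℕ)
    (h : ompResidual a b k = 0) : ompResidual a b (k+1) = 0 := by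
  unfold ompResidual at *
  rw [ompState_succ_zero a b k h]; exact h

/-- Selection matching: under a strict-dominance condition, OMP on the large dictionary
selects the image of the point that OMP on the small dictionary selects. -/
lemma ompSelect_match {ι₁ ι₂ : Type*} [Fintype ι₁] [LinearOrder ι₁]
    [Fintype ι₂] [LinearOrder ι₂] [Nonempty ι₂] [Nonempty ι₁]
    (e : ι₂ ↪o ι₁) (a₁ : ι₁ → EuclideanSpace ℝ (Fin D))
    (a₂ : ι₂ → EuclideanSpace ℝ (Fin D)) (ha : ∀ m, a₁ (e m) = a₂ m)
    (q : EuclideanSpace ℝ (Fin D)) (m₀ : ι₂)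
    (hmax : ∀ m : ι₂, |⟪a₂ m, q⟫| ≤ |⟪a₂ m₀, q⟫|)
    (hstrict : ∀ m : ι₁, m ∉ Set.range e → |⟪a₁ m, q⟫| < |⟪a₂ m₀, q⟫|) :
    ompSelect a₁ q = e (ompSelect a₂ q) := by
  set s₂ := ompSelect a₂ q with hs₂
  have hs₂max : ∀ m : ι₂, |⟪a₂ m, q⟫| ≤ |⟪a₂ s₂, q⟫| := fun m => ompSelect_max a₂ q m
  have hm₀s₂ : |⟪a₂ m₀, q⟫| ≤ |⟪a₂ s₂, q⟫| := hs₂max m₀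
  -- e s₂ is a maximizer for a₁
  have hes₂max : ∀ m : ι₁, |⟪a₁ m, q⟫| ≤ |⟪a₁ (e s₂), q⟫| := by
    intro m
    rw [ha s₂]
    by_cases hm : m ∈ Set.range e
    · obtain ⟨m', rfl⟩ := hm
      rw [ha m']; exact hs₂max m'
    · exact le_trans (le_of_lt (hstrict m hm)) hm₀s₂
  -- any a₁-maximizer lies in the range of e
  have hrange : ∀ m : ι₁, (∀ m', |⟪a₁ m', q⟫| ≤ |⟪a₁ m, q⟫|) → m ∈ Set.range e := by
    intro m hm
    by_contra hmem
    have h1 := hstrict m hmem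
    have h2 : |⟪a₂ m₀, q⟫| ≤ |⟪a₁ m, q⟫| := by
      have := hm (e m₀); rwa [ha m₀] at this
    linarith
  apply le_antisymm
  · exact ompSelect_le a₁ q (e s₂) hes₂max
  · -- e s₂ ≤ ompSelect a₁ q
    set s₁ := ompSelect a₁ q with hs₁
    have hs₁max : ∀ m : ι₁, |⟪a₁ m, q⟫| ≤ |⟪a₁ s₁, q⟫| := fun m => ompSelect_max a₁ q m
    obtain ⟨m', hm'⟩ := hrange s₁ hs₁max
    have hm'max : ∀ m'' : ι₂, |⟪a₂ m'', q⟫| ≤ |⟪a₂ m', q⟫| := by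
      intro m''
      have := hs₁max (e m'')
      rw [ha m''] at this
      rw [← ha m', hm']
      exact this
    have : s₂ ≤ m' := ompSelect_le a₂ q m' hm'max
    calc e s₂ ≤ e m' := e.monotone this
      _ = s₁ := hm'

/-- State matching: the OMP run on the full dictionary coincides (via `e`) with the run on
the subdictionary, under the strict-dominance condition on all residuals of the small run. -/
lemma ompState_match {ι₁ ι₂ : Type*} [Fintype ι₁] [LinearOrder ι₁]
    [Fintype ι₂] [LinearOrder ι₂]
    (e : ι₂ ↪o ι₁) (a₁ : ι₁ → EuclideanSpace ℝ (Fin D))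
    (a₂ : ι₂ → EuclideanSpace ℝ (Fin D)) (ha : ∀ m, a₁ (e m) = a₂ m)
    (b : EuclideanSpace ℝ (Fin D))
    (H : ∀ q : EuclideanSpace ℝ (Fin D), q ≠ 0 → (∃ k, ompResidual a₂ b k = q) →
      ∃ m₀ : ι₂, (∀ m : ι₂, |⟪a₂ m, q⟫| ≤ |⟪a₂ m₀, q⟫|) ∧
        ∀ m : ι₁, m ∉ Set.range e → |⟪a₁ m, q⟫| < |⟪a₂ m₀, q⟫|) :
    ∀ k, ompState a₁ b k =
      ((ompState a₂ b k).1.map e.toEmbedding, (ompState a₂ b k).2) := by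
  intro k
  induction k with
  | zero => simp [ompState]
  | succ k ih =>
    by_cases hq : (ompState a₂ b k).2 = 0
    · have h1 : (ompState a₁ b k).2 = 0 := by rw [ih]; exact hq
      rw [ompState_succ_zero a₁ b k h1, ompState_succ_zero a₂ b k hq, ih]
    · set q := (ompState a₂ b k).2 with hqdef
      obtain ⟨m₀, hmax, hstrict⟩ := H q hq ⟨k, rfl⟩
      haveI : Nonempty ι₂ := ⟨m₀⟩
      haveI : Nonempty ι₁ := ⟨e m₀⟩
      have h1 : (ompState a₁ b k).2 ≠ 0 := by rw [ih]; exact hq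
      rw [ompState_succ_ne a₁ b k h1, ompState_succ_ne a₂ b k hq]
      have hsel : ompSelect a₁ q = e (ompSelect a₂ q) :=
        ompSelect_match e a₁ a₂ ha q m₀ hmax hstrict
      have hT : insert (ompSelect a₁ q) ((ompState a₂ b k).1.map e.toEmbedding)
          = (insert (ompSelect a₂ q) (ompState a₂ b k).1).map e.toEmbedding := by
        rw [hsel, Finset.map_insert]; rfl
      have himg : a₁ '' (((insert (ompSelect a₂ q) (ompState a₂ b k).1).map e.toEmbedding :
          Finset ι₁) : Set ι₁) =
          a₂ '' ((insert (ompSelect a₂ q) (ompState a₂ b k).1 : Finset ι₂) : Set ι₂) := by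
        rw [Finset.coe_map, Set.image_image]
        exact Set.image_congr fun m _ => ha m
      have h2 : (b - (Submodule.orthogonalProjection (Submodule.span ℝ (a₁ ''
            ((insert (ompSelect a₁ q) ((ompState a₂ b k).1.map e.toEmbedding) : Finset ι₁) :
              Set ι₁))) b : EuclideanSpace ℝ (Fin D)))
          = (b - (Submodule.orthogonalProjection (Submodule.span ℝ (a₂ ''
            ((insert (ompSelect a₂ q) (ompState a₂ b k).1 : Finset ι₂) : Set ι₂))) b :
              EuclideanSpace ℝ (Fin D))) := by
        rw [hT, himg]
      rw [ih]
      exact Prod.ext hT h2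

/-- Rank growth: as long as the residual is nonzero, the span of selected atoms has
rank at least the number of iterations, and the residual is the projection residual. -/
lemma ompRank {ι : Type*} [Fintype ι] [LinearOrder ι]
    (a : ι → EuclideanSpace ℝ (Fin D)) (b : EuclideanSpace ℝ (Fin D))
    (H : ∀ q : EuclideanSpace ℝ (Fin D), q ≠ 0 → (∃ k, ompResidual a b k = q) →
      ∃ m, ⟪a m, q⟫ ≠ 0) :
    ∀ k, ompResidual a b k ≠ 0 →
      k ≤ Module.finrank ℝ (Submodule.span ℝ (a '' ((ompState a b k).1 : Set ι))) ∧
      (ompState a b k).2 = b - (Submodule.orthogonalProjection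
        (Submodule.span ℝ (a '' ((ompState a b k).1 : Set ι))) b : EuclideanSpace ℝ (Fin D)) := by
  intro k
  induction k with
  | zero =>
    intro _
    constructor
    · exact Nat.zero_le _
    · show b = b - (Submodule.orthogonalProjection
        (Submodule.span ℝ (a '' ((∅ : Finset ι) : Set ι))) b : EuclideanSpace ℝ (Fin D))
      rw [Finset.coe_empty, Set.image_empty, Submodule.span_empty]
      simp
  | succ k ih =>
    intro h
    have hk : ompResidual a b k ≠ 0 := by
      intro h0; exact h (ompResidual_succ_eq_zero a b k h0)
    obtain ⟨m, hm⟩ := H (ompResidual a b k) hk ⟨k, rfl⟩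
    haveI : Nonempty ι := ⟨m⟩
    obtain ⟨ihrank, ihres⟩ := ih hk
    have hq' : (ompState a b k).2 ≠ 0 := hk
    rw [ompState_succ_ne a b k hq']
    set q := (ompState a b k).2 with hqdef
    set K := Submodule.span ℝ (a '' ((ompState a b k).1 : Set ι)) with hKdef
    set sel := ompSelect a q with hseldef
    have hqorth : q ∈ Kᗮ := by
      rw [ihres]; exact K.sub_starProjection_mem_orthogonal b
    have hselne : ⟪a sel, q⟫ ≠ 0 := by
      have h1 : |⟪a m, q⟫| ≤ |⟪a sel, q⟫| := ompSelect_max a q m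
      have h2 : 0 < |⟪a m, q⟫| := abs_pos.mpr hm
      intro h0
      rw [h0, abs_zero] at h1; linarith
    have hselnotmem : a sel ∉ K := by
      intro hmem
      exact hselne ((Submodule.mem_orthogonal K q).mp hqorth (a sel) hmem)
    set K' := Submodule.span ℝ
      (a '' ((insert sel (ompState a b k).1 : Finset ι) : Set ι)) with hK'def
    have hKK' : K < K' := by
      have hle : K ≤ K' := Submodule.span_mono (by
        rw [Finset.coe_insert, Set.image_insert_eq]
        exact Set.subset_insert _ _)
      refine lt_of_le_of_ne hle fun hEq => ?_
      apply hselnotmem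
      rw [hEq]
      exact Submodule.subset_span (by
        rw [Finset.coe_insert, Set.image_insert_eq]
        exact Set.mem_insert _ _)
    constructor
    · have := Submodule.finrank_lt_finrank_of_lt hKK'
      omega
    · rfl

/-- Fix `x j ∈ S i`. If for every residual direction `w ∈ W_j^i` the maximal
inner product (in absolute value) of `w` with points of the other subspaces is smaller than
the maximal inner product with points of `X^i \ {x j}`, then `OMP(X₋ⱼ, x j)` run with `ε = 0`
gives a subspace-preserving representation of `x j`, and it terminates in at most
`d i = dim S i` iterations. -/
theorem sscOmp_dualCondition_subspacePreserving
    {D n N : ℕ} (S : Fin n → Submodule ℝ (EuclideanSpace ℝ (Fin D)))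
    (x : Fin N → EuclideanSpace ℝ (Fin D))
    (hunit : ∀ j, ‖x j‖ = 1)
    (hmem : ∀ j, ∃ i, x j ∈ S i)
    (hrank : ∀ i, ∀ j, x j ∈ S i → Submodule.span ℝ (subXmin S x i j) = S i)
    (i : Fin n) (j : Fin N) (hj : x j ∈ S i)
    (hcond : ∀ w ∈ Wji S x i j,
      sSup {r : ℝ | ∃ m, (∃ k, k ≠ i ∧ x m ∈ S k) ∧ r = |⟪w, x m⟫|} <
      sSup {r : ℝ | ∃ m, m ≠ j ∧ x m ∈ S i ∧ r = |⟪w, x m⟫|}) :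
    (∀ c : {m : Fin N // m ≠ j} → ℝ,
      IsOMPOutput (fun m => x m.1) (x j) (N - 1) c →
      ∀ m, c m ≠ 0 → x m.1 ∈ S i) ∧
    ompResidual (fun m : {m : Fin N // m ≠ j} => x m.1) (x j) (Module.finrank ℝ ↥(S i)) = 0 := by
  classical
  have hxj : x j ≠ 0 := by
    intro h; have h1 := hunit j; rw [h] at h1; simp at h1
  have hι₂ : Nonempty {m : Fin N // x m ∈ S i ∧ m ≠ j} := by
    by_contra hne
    have hempty : {m : Fin N | x m ∈ S i ∧ m ≠ j} = ∅ := by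
      ext m
      simp only [Set.mem_setOf_eq, Set.mem_empty_iff_false, iff_false]
      intro hm; exact hne ⟨⟨m, hm⟩⟩
    have h1 := hrank i j hj
    unfold subXmin at h1
    rw [hempty, Set.image_empty, Submodule.span_empty] at h1
    rw [← h1, Submodule.mem_bot] at hj
    exact hxj hj
  set a₁ : {m : Fin N // m ≠ j} → EuclideanSpace ℝ (Fin D) := fun m => x m.1 with ha₁
  set a₂ : {m : Fin N // x m ∈ S i ∧ m ≠ j} → EuclideanSpace ℝ (Fin D) :=
    fun m => x m.1 with ha₂
  set e : {m : Fin N // x m ∈ S i ∧ m ≠ j} ↪o {m : Fin N // m ≠ j} :=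
    OrderEmbedding.ofStrictMono (fun m => ⟨m.1, m.2.2⟩) (fun m m' h => by exact h) with he
  have ha : ∀ m, a₁ (e m) = a₂ m := fun m => rfl
  have hrangee : ∀ m : {m : Fin N // m ≠ j}, m ∈ Set.range e ↔ x m.1 ∈ S i := by
    intro m
    constructor
    · rintro ⟨m', rfl⟩; exact m'.2.1
    · intro h; exact ⟨⟨m.1, h, m.2⟩, rfl⟩
  have Hkey : ∀ q : EuclideanSpace ℝ (Fin D), q ≠ 0 →
      (∃ k, ompResidual a₂ (x j) k = q) →
      ∃ m₀ : {m : Fin N // x m ∈ S i ∧ m ≠ j},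
        0 < |⟪a₂ m₀, q⟫| ∧ (∀ m, |⟪a₂ m, q⟫| ≤ |⟪a₂ m₀, q⟫|) ∧
        ∀ m : {m : Fin N // m ≠ j}, m ∉ Set.range e → |⟪a₁ m, q⟫| < |⟪a₂ m₀, q⟫| := by
    rintro q hq ⟨k, hk⟩
    set w : EuclideanSpace ℝ (Fin D) := ‖q‖⁻¹ • q with hw
    have hwmem : w ∈ Wji S x i j := ⟨k, by rw [hk]; exact hq, by rw [hk]⟩
    have hAB := hcond w hwmem
    have hfinA : {r : ℝ | ∃ m, (∃ k, k ≠ i ∧ x m ∈ S k) ∧ r = |⟪w, x m⟫|}.Finite :=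
      (Set.finite_range fun m : Fin N => |⟪w, x m⟫|).subset
        (by rintro r ⟨m, -, rfl⟩; exact ⟨m, rfl⟩)
    have hfinB : {r : ℝ | ∃ m, m ≠ j ∧ x m ∈ S i ∧ r = |⟪w, x m⟫|}.Finite :=
      (Set.finite_range fun m : Fin N => |⟪w, x m⟫|).subset
        (by rintro r ⟨m, -, -, rfl⟩; exact ⟨m, rfl⟩)
    have hBne : {r : ℝ | ∃ m, m ≠ j ∧ x m ∈ S i ∧ r = |⟪w, x m⟫|}.Nonempty := by
      obtain ⟨m₂⟩ := hι₂
      exact ⟨_, m₂.1, m₂.2.2, m₂.2.1, rfl⟩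
    obtain ⟨m₁, hm₁j, hm₁S, hm₁B⟩ := hBne.csSup_mem hfinB
    have hA0 : (0:ℝ) ≤ sSup {r : ℝ | ∃ m, (∃ k, k ≠ i ∧ x m ∈ S k) ∧ r = |⟪w, x m⟫|} := by
      rcases Set.eq_empty_or_nonempty
        {r : ℝ | ∃ m, (∃ k, k ≠ i ∧ x m ∈ S k) ∧ r = |⟪w, x m⟫|} with hemp | hne
      · rw [hemp, Real.sSup_empty]
      · obtain ⟨r, m, hm, rfl⟩ := hne
        exact le_trans (abs_nonneg _) (le_csSup hfinA.bddAbove ⟨m, hm, rfl⟩)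
    have hqn : (0:ℝ) < ‖q‖ := norm_pos_iff.mpr hq
    have hconv : ∀ v : EuclideanSpace ℝ (Fin D), |⟪v, q⟫| = ‖q‖ * |⟪w, v⟫| := by
      intro v
      rw [hw, real_inner_smul_left, abs_mul, abs_inv, abs_norm, real_inner_comm v q]
      field_simp
    refine ⟨⟨m₁, hm₁S, hm₁j⟩, ?_, ?_, ?_⟩
    · show 0 < |⟪x m₁, q⟫|
      rw [hconv, ← hm₁B]
      exact mul_pos hqn (lt_of_le_of_lt hA0 hAB)
    · intro m
      show |⟪x m.1, q⟫| ≤ |⟪x m₁, q⟫|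
      rw [hconv, hconv, ← hm₁B]
      exact mul_le_mul_of_nonneg_left
        (le_csSup hfinB.bddAbove ⟨m.1, m.2.2, m.2.1, rfl⟩) (le_of_lt hqn)
    · intro m hm
      show |⟪x m.1, q⟫| < |⟪x m₁, q⟫|
      have hmS : x m.1 ∉ S i := fun h => hm ((hrangee m).mpr h)
      obtain ⟨kk, hkk⟩ := hmem m.1
      have hkki : kk ≠ i := fun h => hmS (h ▸ hkk)
      rw [hconv, hconv, ← hm₁B]
      refine mul_lt_mul_of_pos_left (lt_of_le_of_lt ?_ hAB) hqn
      exact le_csSup hfinA.bddAbove ⟨m.1, ⟨kk, hkki, hkk⟩, rfl⟩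
  have hmatch := ompState_match e a₁ a₂ ha (x j) (fun q hq hex =>
    let ⟨m₀, _, h2, h3⟩ := Hkey q hq hex; ⟨m₀, h2, h3⟩)
  constructor
  · intro c hc m hcm
    have hm := hc.1 m hcm
    unfold ompSupport at hm
    rw [hmatch (N-1)] at hm
    obtain ⟨m', -, rfl⟩ := Finset.mem_map.mp hm
    exact m'.2.1
  · have Hrank : ∀ q : EuclideanSpace ℝ (Fin D), q ≠ 0 →
        (∃ k, ompResidual a₂ (x j) k = q) → ∃ m, ⟪a₂ m, q⟫ ≠ 0 := by
      intro q hq hex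
      obtain ⟨m₀, h1, -, -⟩ := Hkey q hq hex
      refine ⟨m₀, fun h0 => ?_⟩
      rw [h0, abs_zero] at h1; linarith
    have hres2 : ompResidual a₂ (x j) (Module.finrank ℝ (S i)) = 0 := by
      by_contra hres
      obtain ⟨hrk, hformula⟩ := ompRank a₂ (x j) Hrank (Module.finrank ℝ (S i)) hres
      have hsub : Submodule.span ℝ
          (a₂ '' (((ompState a₂ (x j) (Module.finrank ℝ (S i))).1 : Finset _) : Set _)) ≤ S i := by
        rw [Submodule.span_le]
        rintro v ⟨m, -, rfl⟩
        exact m.2.1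
      have heq := Submodule.eq_of_le_of_finrank_le hsub hrk
      apply hres
      show (ompState a₂ (x j) (Module.finrank ℝ (S i))).2 = 0
      rw [hformula, heq]; exact sub_eq_zero.mpr (Submodule.starProjection_eq_self_iff.mpr hj).symm
    unfold ompResidual
    rw [hmatch (Module.finrank ℝ (S i))]
    exact hres2


end SSCOMP
end
end

section
/- If for every i = 1, ..., n it holds that max_{k ≠ i} μ(X^i, X^k) < r_i², then for every data point x_j the representation produced by OMP(X_{-j}, x_j) with ε = 0 and k_max = N − 1 is subspace preserving. -/
open scoped RealInnerProductSpace Classical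

noncomputable section

namespace SSCOMP

variable {D : ℕ}

variable {n N : ℕ}

lemma inradius_nonneg (P : Set (EuclideanSpace ℝ (Fin D))) : 0 ≤ inradius P :=
  Real.sSup_nonneg (fun _ hr => hr.1)

lemma span_symmHull (A : Set (EuclideanSpace ℝ (Fin D))) :
    Submodule.span ℝ (symmHull A) = Submodule.span ℝ A := by
  apply le_antisymm
  · rw [Submodule.span_le]
    refine convexHull_min ?_ (Submodule.span ℝ A).convex
    rintro p (hp | hp)
    · exact Submodule.subset_span hp
    · exact neg_neg p ▸ Submodule.neg_mem _ (Submodule.subset_span (Set.mem_neg.mp hp))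
  · exact Submodule.span_mono (fun p hp => subset_convexHull ℝ _ (Or.inl hp))

lemma neg_mem_symmHull {A : Set (EuclideanSpace ℝ (Fin D))} {p : EuclideanSpace ℝ (Fin D)}
    (hp : p ∈ symmHull A) : -p ∈ symmHull A := by
  have : -(A ∪ -A) = A ∪ -A := by
    show -A ∪ - -A = _
    rw [neg_neg, Set.union_comm]
  rw [symmHull, ← this, convexHull_neg]
  exact Set.neg_mem_neg.mpr hp

lemma ball_smul_mem {A : Set (EuclideanSpace ℝ (Fin D))} {w : EuclideanSpace ℝ (Fin D)}
    (hw : w ∈ Submodule.span ℝ A) (hw1 : ‖w‖ = 1)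
    {r : ℝ} (hr : 0 ≤ r) {c : EuclideanSpace ℝ (Fin D)}
    (hc : c ∈ Submodule.span ℝ (symmHull A))
    (hball : ∀ y ∈ Submodule.span ℝ (symmHull A), ‖y - c‖ ≤ r → y ∈ symmHull A) :
    r • w ∈ symmHull A := by
  have hw' : w ∈ Submodule.span ℝ (symmHull A) := by rw [span_symmHull]; exact hw
  have hnorm : ‖r • w‖ = r := by rw [norm_smul, hw1, Real.norm_eq_abs, abs_of_nonneg hr, mul_one]
  have h1 : c + r • w ∈ symmHull A := by
    refine hball _ (Submodule.add_mem _ hc (Submodule.smul_mem _ _ hw')) ?_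
    simp [hnorm]
  have h2 : c - r • w ∈ symmHull A := by
    refine hball _ (Submodule.sub_mem _ hc (Submodule.smul_mem _ _ hw')) ?_
    simp [norm_neg, hnorm]
  have h3 : r • w - c ∈ symmHull A := by
    have := neg_mem_symmHull h2
    rwa [neg_sub] at this
  have hcomb := (convex_convexHull ℝ (A ∪ -A)) h1 h3
    (by norm_num : (0:ℝ) ≤ 1/2) (by norm_num : (0:ℝ) ≤ 1/2) (by norm_num)
  have : (1/2 : ℝ) • (c + r • w) + (1/2 : ℝ) • (r • w - c) = r • w := by
    module
  rwa [this] at hcomb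

lemma inner_abs_le_of_mem_symmHull {A : Set (EuclideanSpace ℝ (Fin D))}
    {p u : EuclideanSpace ℝ (Fin D)} {M : ℝ}
    (hM : ∀ v ∈ A, |⟪u, v⟫| ≤ M) (hp : p ∈ symmHull A) : |⟪u, p⟫| ≤ M := by
  have hconv : Convex ℝ {q : EuclideanSpace ℝ (Fin D) | |⟪u, q⟫| ≤ M} := by
    intro p1 hp1 p2 hp2 a b ha hb hab
    simp only [Set.mem_setOf_eq] at *
    calc |⟪u, a • p1 + b • p2⟫| = |a * ⟪u, p1⟫ + b * ⟪u, p2⟫| := by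
          rw [inner_add_right, real_inner_smul_right, real_inner_smul_right]
      _ ≤ a * |⟪u, p1⟫| + b * |⟪u, p2⟫| := by
          refine (abs_add_le _ _).trans ?_
          rw [abs_mul, abs_mul, abs_of_nonneg ha, abs_of_nonneg hb]
      _ ≤ a * M + b * M :=
          add_le_add (mul_le_mul_of_nonneg_left hp1 ha) (mul_le_mul_of_nonneg_left hp2 hb)
      _ = M := by rw [← add_mul, hab, one_mul]
  have hsub : symmHull A ⊆ {q : EuclideanSpace ℝ (Fin D) | |⟪u, q⟫| ≤ M} := by
    refine convexHull_min ?_ hconv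
    rintro v (hv | hv)
    · exact hM v hv
    · simp only [Set.mem_setOf_eq]
      rw [show v = -(-v) by rw [neg_neg], inner_neg_right, abs_neg]
      exact hM (-v) (Set.mem_neg.mp hv)
  exact hsub hp

lemma main_sep {D n N : ℕ} (S : Fin n → Submodule ℝ (EuclideanSpace ℝ (Fin D)))
    (x : Fin N → EuclideanSpace ℝ (Fin D))
    (hunit : ∀ j, ‖x j‖ = 1) (hmem : ∀ j, ∃ i, x j ∈ S i)
    (hrank : ∀ i, ∀ j, x j ∈ S i → Submodule.span ℝ (subXmin S x i j) = S i)
    (hcond : ∀ i : Fin n,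
      sSup {r : ℝ | ∃ k, k ≠ i ∧ r = coherence (subX S x i) (subX S x k)} < (rMin S x i) ^ 2)
    (j : Fin N) (i : Fin n) (hij : x j ∈ S i)
    (w : EuclideanSpace ℝ (Fin D)) (hwS : w ∈ S i) (hw1 : ‖w‖ = 1) :
    ∃ m0 : Fin N, (x m0 ∈ S i ∧ m0 ≠ j) ∧
      ∀ l : Fin N, x l ∉ S i → |⟪x l, w⟫| < |⟪x m0, w⟫| := by
  classical
  set A := subXmin S x i j with hA
  have hspan : Submodule.span ℝ A = S i := hrank i j hij
  -- the index set is nonempty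
  set F : Finset (Fin N) := Finset.univ.filter (fun m => x m ∈ S i ∧ m ≠ j) with hF
  have hFne : F.Nonempty := by
    by_contra hne
    have hAe : A = ∅ := by
      rw [hA, subXmin]
      apply Set.image_eq_empty.mpr
      ext m
      simp only [Set.mem_setOf_eq, Set.mem_empty_iff_false, iff_false]
      intro hm
      exact hne ⟨m, Finset.mem_filter.mpr ⟨Finset.mem_univ m, hm⟩⟩
    rw [hAe, Submodule.span_empty] at hspan
    have : x j = 0 := by rw [← Submodule.mem_bot (R := ℝ), hspan]; exact hij
    have h1 := hunit j
    rw [this, norm_zero] at h1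
    exact one_ne_zero h1.symm
  obtain ⟨m0, hm0F, hm0max⟩ := F.exists_max_image (fun m => |⟪x m, w⟫|) hFne
  obtain ⟨hm0S, hm0j⟩ := (Finset.mem_filter.mp hm0F).2
  set M := |⟪x m0, w⟫| with hMdef
  have hM0 : 0 ≤ M := abs_nonneg _
  have hwA : w ∈ Submodule.span ℝ A := by rw [hspan]; exact hwS
  -- every admissible inradius value r satisfies r • w ∈ symmHull A
  have hrw : ∀ r ∈ {r : ℝ | 0 ≤ r ∧ ∃ c ∈ Submodule.span ℝ (symmHull A),
      ∀ y ∈ Submodule.span ℝ (symmHull A), ‖y - c‖ ≤ r → y ∈ symmHull A},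
      r • w ∈ symmHull A := by
    rintro r ⟨hr0, c, hc, hball⟩
    exact ball_smul_mem hwA hw1 hr0 hc hball
  -- bound from below: inradius ≤ M
  have hAbound : ∀ v ∈ A, |⟪w, v⟫| ≤ M := by
    rintro v ⟨m, hm, rfl⟩
    rw [real_inner_comm]
    exact hm0max m (Finset.mem_filter.mpr ⟨Finset.mem_univ m, hm⟩)
  have hrle : ∀ r ∈ {r : ℝ | 0 ≤ r ∧ ∃ c ∈ Submodule.span ℝ (symmHull A),
      ∀ y ∈ Submodule.span ℝ (symmHull A), ‖y - c‖ ≤ r → y ∈ symmHull A}, r ≤ M := by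
    intro r hr
    have hmem' := inner_abs_le_of_mem_symmHull hAbound (hrw r hr)
    have : ⟪w, r • w⟫ = r := by
      rw [real_inner_smul_right, real_inner_self_eq_norm_sq, hw1]; ring
    calc r = ⟪w, r • w⟫ := this.symm
      _ ≤ |⟪w, r • w⟫| := le_abs_self _
      _ ≤ M := hmem'
  have hinrad : inradius (symmHull A) ≤ M := Real.sSup_le hrle hM0
  have hrmin_le : rMin S x i ≤ inradius (symmHull A) := by
    apply csInf_le
    · exact ⟨0, by rintro r ⟨j', _, rfl⟩; exact inradius_nonneg _⟩
    · exact ⟨j, hij, rfl⟩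
  refine ⟨m0, ⟨hm0S, hm0j⟩, ?_⟩
  intro l hl
  obtain ⟨k, hk⟩ := hmem l
  have hki : k ≠ i := fun h => hl (h ▸ hk)
  set μik := coherence (subX S x i) (subX S x k) with hμik
  set μs := sSup {r : ℝ | ∃ k, k ≠ i ∧ r = coherence (subX S x i) (subX S x k)} with hμs
  have hμik_le : μik ≤ μs := by
    apply le_csSup
    · refine Set.Finite.bddAbove (Set.Finite.subset
        (Set.finite_range (fun k => coherence (subX S x i) (subX S x k))) ?_)
      rintro r ⟨k', _, rfl⟩; exact ⟨k', rfl⟩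
    · exact ⟨k, hki, rfl⟩
  have hμik0 : 0 ≤ μik := by
    apply Real.sSup_nonneg
    rintro r ⟨u, _, v, _, rfl⟩; exact abs_nonneg _
  have hμs0 : 0 ≤ μs := le_trans hμik0 hμik_le
  have hμslt := hcond i
  rw [← hμs] at hμslt
  have hrmin0 : 0 ≤ rMin S x i := by
    apply Real.sInf_nonneg
    rintro r ⟨j', _, rfl⟩; exact inradius_nonneg _
  have hrminpos : 0 < rMin S x i := by
    rcases hrmin0.lt_or_eq with h | h
    · exact h
    · exfalso; rw [← h] at hμslt; simp at hμslt; exact absurd hμslt (not_lt.mpr hμs0)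
  set t := |⟪x l, w⟫| with ht
  have hAout : ∀ v ∈ A, |⟪x l, v⟫| ≤ μik := by
    rintro v ⟨m, hm, rfl⟩
    apply le_csSup
    · refine ⟨1, ?_⟩
      rintro r ⟨u, ⟨mu, _, rfl⟩, v', ⟨mv, _, rfl⟩, rfl⟩
      calc |⟪x mu, x mv⟫| ≤ ‖x mu‖ * ‖x mv‖ := abs_real_inner_le_norm _ _
        _ = 1 := by rw [hunit, hunit, mul_one]
    · exact ⟨x m, ⟨m, hm.1, rfl⟩, x l, ⟨l, hk, rfl⟩, by rw [real_inner_comm]⟩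
  have hrt : ∀ r ∈ {r : ℝ | 0 ≤ r ∧ ∃ c ∈ Submodule.span ℝ (symmHull A),
      ∀ y ∈ Submodule.span ℝ (symmHull A), ‖y - c‖ ≤ r → y ∈ symmHull A},
      r * t ≤ μik := by
    intro r hr
    have hmem' := inner_abs_le_of_mem_symmHull hAout (hrw r hr)
    rwa [real_inner_smul_right, abs_mul, abs_of_nonneg hr.1] at hmem'
  set ρ := inradius (symmHull A) with hρ
  have hρt : ρ * t ≤ μik := by
    rcases (abs_nonneg (⟪x l, w⟫ : ℝ)).lt_or_eq with htpos | hteq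
    · have : ρ ≤ μik / t := by
        apply Real.sSup_le
        · intro r hr
          rw [le_div_iff₀ htpos]
          exact hrt r hr
        · exact div_nonneg hμik0 htpos.le
      calc ρ * t ≤ (μik / t) * t := mul_le_mul_of_nonneg_right this (abs_nonneg _)
        _ = μik := div_mul_cancel₀ μik htpos.ne'
    · rw [ht, ← hteq, mul_zero]; exact hμik0
  have hρpos : 0 < ρ := lt_of_lt_of_le hrminpos hrmin_le
  have hstep : ρ * t < ρ * rMin S x i := by
    calc ρ * t ≤ μik := hρt
      _ ≤ μs := hμik_le
      _ < rMin S x i ^ 2 := hμslt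
      _ = rMin S x i * rMin S x i := sq (rMin S x i) ▸ (by ring)
      _ ≤ ρ * rMin S x i := mul_le_mul_of_nonneg_right hrmin_le hrmin0
  have htlt : t < rMin S x i := lt_of_mul_lt_mul_left hstep hρpos.le
  exact lt_of_lt_of_le htlt (le_trans hrmin_le hinrad)

lemma omp_invariant {D n N : ℕ} (S : Fin n → Submodule ℝ (EuclideanSpace ℝ (Fin D)))
    (x : Fin N → EuclideanSpace ℝ (Fin D))
    (hunit : ∀ j, ‖x j‖ = 1) (hmem : ∀ j, ∃ i, x j ∈ S i)
    (hrank : ∀ i, ∀ j, x j ∈ S i → Submodule.span ℝ (subXmin S x i j) = S i)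
    (hcond : ∀ i : Fin n,
      sSup {r : ℝ | ∃ k, k ≠ i ∧ r = coherence (subX S x i) (subX S x k)} < (rMin S x i) ^ 2)
    (j : Fin N) (i : Fin n) (hij : x j ∈ S i) :
    ∀ k, (∀ m ∈ (ompState (fun m : {m : Fin N // m ≠ j} => x m.1) (x j) k).1, x m.1 ∈ S i) ∧
      (ompState (fun m : {m : Fin N // m ≠ j} => x m.1) (x j) k).2 ∈ S i := by
  set a : {m : Fin N // m ≠ j} → EuclideanSpace ℝ (Fin D) := fun m => x m.1 with ha
  intro k
  induction k with
  | zero => exact ⟨by simp [ompState], by simpa [ompState] using hij⟩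
  | succ k ih =>
    obtain ⟨ihT, ihq⟩ := ih
    by_cases hq : (ompState a (x j) k).2 = 0
    · rw [ompState]
      simp only [hq, if_pos rfl]
      exact ⟨ihT, ihq⟩
    · by_cases hne : Nonempty {m : Fin N // m ≠ j}
      · set q := (ompState a (x j) k).2 with hqdef
        set w := ‖q‖⁻¹ • q with hw
        have hwS : w ∈ S i := Submodule.smul_mem _ _ ihq
        have hw1 : ‖w‖ = 1 := norm_smul_inv_norm hq
        obtain ⟨m0, ⟨hm0S, hm0j⟩, hm0⟩ :=
          main_sep S x hunit hmem hrank hcond j i hij w hwS hw1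
        -- the selected index lies in S i
        have hselF := Finset.min'_mem
          (Finset.univ.filter fun m => ∀ m', |⟪a m', q⟫| ≤ |⟪a m, q⟫|) (by
            obtain ⟨i', -, hi⟩ := Finset.exists_max_image
              (Finset.univ : Finset {m : Fin N // m ≠ j}) (fun m => |⟪a m, q⟫|)
              Finset.univ_nonempty
            exact ⟨i', Finset.mem_filter.mpr ⟨Finset.mem_univ i',
              fun m => hi m (Finset.mem_univ m)⟩⟩)
        have hselmax : ∀ m', |⟪a m', q⟫| ≤ |⟪a (ompSelect a q), q⟫| := by
          have := (Finset.mem_filter.mp hselF).2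
          exact this
        have hselS : x (ompSelect a q).1 ∈ S i := by
          by_contra hout
          have hlt := hm0 _ hout
          have hle := hselmax ⟨m0, hm0j⟩
          have hscale : ∀ v : EuclideanSpace ℝ (Fin D), |⟪v, w⟫| = ‖q‖⁻¹ * |⟪v, q⟫| := by
            intro v
            rw [hw, real_inner_smul_right, abs_mul, abs_of_nonneg (by positivity)]
          rw [hscale, hscale] at hlt
          have hqpos : (0:ℝ) < ‖q‖⁻¹ := by
            have : (0:ℝ) < ‖q‖ := norm_pos_iff.mpr hq
            positivity
          have := (mul_le_mul_iff_right₀ hqpos).mpr hle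
          exact absurd this (not_le.mpr hlt)
        -- unfold the state
        rw [ompState]
        simp only [← hqdef, if_neg hq, dif_pos hne]
        constructor
        · intro m hm
          simp only [Finset.mem_insert] at hm
          rcases hm with h | h
          · rw [h]; exact hselS
          · exact ihT m h
        · refine Submodule.sub_mem _ hij
            (Submodule.span_le.mpr ?_ (Submodule.coe_mem _))
          rintro p ⟨m, hm, rfl⟩
          simp only [Finset.coe_insert, Set.mem_insert_iff, Finset.mem_coe] at hm
          rcases hm with h | h
          · rw [h]; exact hselS
          · exact ihT m h
      · rw [ompState]
        simp only [hq, if_neg, dif_neg hne]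
        exact ⟨ihT, ihq⟩

/-- **Corollary 1.** If for every `i` one has `max_{k ≠ i} μ(X^i, X^k) < r_i²`,
then for every data point the representation produced by OMP (with `ε = 0` and
`k_max = N − 1`) is subspace preserving. -/
theorem sscOmp_coherence_lt_inradiusSq_subspacePreserving
    {D n N : ℕ} (S : Fin n → Submodule ℝ (EuclideanSpace ℝ (Fin D)))
    (x : Fin N → EuclideanSpace ℝ (Fin D))
    (hunit : ∀ j, ‖x j‖ = 1)
    (hmem : ∀ j, ∃ i, x j ∈ S i)
    (hrank : ∀ i, ∀ j, x j ∈ S i → Submodule.span ℝ (subXmin S x i j) = S i)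
    (hcond : ∀ i : Fin n,
      sSup {r : ℝ | ∃ k, k ≠ i ∧ r = coherence (subX S x i) (subX S x k)} < (rMin S x i) ^ 2) :
    ∀ (j : Fin N) (i : Fin n), x j ∈ S i →
      ∀ c : {m : Fin N // m ≠ j} → ℝ,
        IsOMPOutput (fun m => x m.1) (x j) (N - 1) c →
        ∀ m, c m ≠ 0 → x m.1 ∈ S i := by
  intro j i hij c hc m hcm
  exact (omp_invariant S x hunit hmem hrank hcond j i hij (N - 1)).1 m (hc.1 m hcm)

end SSCOMP
end
end

section
/- Let X^i be a matrix with unit ℓ2-norm columns spanning a linear subspace S_i, and let w ∈ S_i be a unit-norm vector. Let ĉ be a minimizer of ‖c‖_1 subject to w = X^i c. Then for any matrix X^k with unit ℓ2-norm columns, ‖(X^k)^⊤ w‖_∞ ≤ μ(X^i, X^k) · ‖ĉ‖_1 ≤ μ(X^i, X^k) / r(P^i), where P^i := conv(± X^i). -/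
open scoped RealInnerProductSpace Classical

noncomputable section

namespace SSCOMP

variable {D : ℕ}

variable {n N : ℕ}

/-- Let the unit-norm columns of `X^i` span `S_i`, let `w ∈ S_i` be a
unit-norm vector, and let `ĉ` minimize `‖c‖₁` subject to `w = X^i c`. Then for any matrix
`X^k` with unit-norm columns, `‖(X^k)ᵀ w‖_∞ ≤ μ(X^i, X^k) ‖ĉ‖₁ ≤ μ(X^i, X^k) / r(P^i)`. -/
theorem dual_linf_coherence_bound
    {D : ℕ} {ι κ : Type*} [Fintype ι] [Fintype κ]
    (a : ι → EuclideanSpace ℝ (Fin D)) (bcols : κ → EuclideanSpace ℝ (Fin D))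
    (Si : Submodule ℝ (EuclideanSpace ℝ (Fin D)))
    (haunit : ∀ m, ‖a m‖ = 1) (hbunit : ∀ m, ‖bcols m‖ = 1)
    (hspan : Submodule.span ℝ (Set.range a) = Si)
    (hinr : 0 < inradius (symmHull (Set.range a)))
    (w : EuclideanSpace ℝ (Fin D)) (hw : w ∈ Si) (hwn : ‖w‖ = 1)
    (ch : ι → ℝ)
    (hrep : w = ∑ m, ch m • a m)
    (hmin : ∀ c : ι → ℝ, w = ∑ m, c m • a m → ∑ m, |ch m| ≤ ∑ m, |c m|) :
    sSup {r : ℝ | ∃ m, r = |⟪bcols m, w⟫|} ≤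
      coherence (Set.range a) (Set.range bcols) * ∑ m, |ch m| ∧
    coherence (Set.range a) (Set.range bcols) * ∑ m, |ch m| ≤
      coherence (Set.range a) (Set.range bcols) / inradius (symmHull (Set.range a)) := by
  classical
  set A : Set (EuclideanSpace ℝ (Fin D)) := Set.range a with hA
  set μ := coherence (Set.range a) (Set.range bcols) with hμdef
  -- ι is nonempty
  have hιne : Nonempty ι := by
    by_contra h
    rw [not_nonempty_iff] at h
    have hz : w = 0 := by rw [hrep]; simp
    rw [hz] at hwn; simp at hwn
  -- coherence set is bounded above by 1
  have hbddμ : BddAbove {r : ℝ | ∃ u ∈ Set.range a, ∃ v ∈ Set.range bcols, r = |⟪u, v⟫|} := by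
    refine ⟨1, ?_⟩
    rintro r ⟨u, ⟨m, rfl⟩, v, ⟨k, rfl⟩, rfl⟩
    calc |⟪a m, bcols k⟫| ≤ ‖a m‖ * ‖bcols k‖ := abs_real_inner_le_norm _ _
      _ = 1 := by rw [haunit, hbunit]; ring
  have hμnonneg : 0 ≤ μ :=
    Real.sSup_nonneg (by rintro r ⟨u, -, v, -, rfl⟩; exact abs_nonneg _)
  have hcoh : ∀ (m : ι) (k : κ), |⟪bcols k, a m⟫| ≤ μ := by
    intro m k
    refine le_csSup hbddμ ⟨a m, ⟨m, rfl⟩, bcols k, ⟨k, rfl⟩, ?_⟩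
    rw [real_inner_comm]
  have hchnonneg : (0:ℝ) ≤ ∑ m, |ch m| := Finset.sum_nonneg fun m _ => abs_nonneg _
  have key : ∀ k, |⟪bcols k, w⟫| ≤ μ * ∑ m, |ch m| := by
    intro k
    rw [hrep]
    have hinner : ⟪bcols k, ∑ m, ch m • a m⟫ = ∑ m, ch m * ⟪bcols k, a m⟫ := by
      simp only [inner_sum, real_inner_smul_right]
    rw [hinner]
    calc |∑ m, ch m * ⟪bcols k, a m⟫| ≤ ∑ m, |ch m * ⟪bcols k, a m⟫| :=
          Finset.abs_sum_le_sum_abs _ _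
      _ = ∑ m, |ch m| * |⟪bcols k, a m⟫| := by simp [abs_mul]
      _ ≤ ∑ m, |ch m| * μ :=
          Finset.sum_le_sum fun m _ => mul_le_mul_of_nonneg_left (hcoh m k) (abs_nonneg _)
      _ = μ * ∑ m, |ch m| := by rw [← Finset.sum_mul]; ring
  constructor
  · exact Real.sSup_le (by rintro r ⟨k, rfl⟩; exact key k) (mul_nonneg hμnonneg hchnonneg)
  -- second inequality
  -- the symmetric hull is contained in the ℓ¹-ball image
  have hTsub : symmHull A ⊆
      {v | ∃ c : ι → ℝ, v = ∑ m, c m • a m ∧ ∑ m, |c m| ≤ 1} := by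
    apply convexHull_min
    · rintro y (⟨m, rfl⟩ | hy)
      · refine ⟨fun j => if j = m then 1 else 0, ?_, ?_⟩
        · simp [ite_smul]
        · simp [apply_ite abs]
      · rw [Set.mem_neg] at hy
        obtain ⟨m, hm⟩ := hy
        refine ⟨fun j => if j = m then -1 else 0, ?_, ?_⟩
        · have : y = -(a m) := by rw [hm]; simp
          rw [this]; simp [ite_smul]
        · simp [apply_ite abs]
    · rintro v1 ⟨c1, rfl, h1⟩ v2 ⟨c2, rfl, h2⟩ s t hs ht hst
      refine ⟨fun m => s * c1 m + t * c2 m, ?_, ?_⟩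
      · rw [Finset.smul_sum, Finset.smul_sum, ← Finset.sum_add_distrib]
        congr 1; ext m
        rw [add_smul, mul_smul, mul_smul]
      · calc ∑ m, |s * c1 m + t * c2 m| ≤ ∑ m, (s * |c1 m| + t * |c2 m|) :=
              Finset.sum_le_sum fun m _ => (abs_add_le _ _).trans (by
                rw [abs_mul, abs_mul, abs_of_nonneg hs, abs_of_nonneg ht])
          _ = s * ∑ m, |c1 m| + t * ∑ m, |c2 m| := by
              rw [Finset.sum_add_distrib, Finset.mul_sum, Finset.mul_sum]
          _ ≤ s * 1 + t * 1 := add_le_add (mul_le_mul_of_nonneg_left h1 hs)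
              (mul_le_mul_of_nonneg_left h2 ht)
          _ = 1 := by rw [mul_one, mul_one, hst]
  -- symmHull is symmetric
  have hPsymm : ∀ x ∈ symmHull A, -x ∈ symmHull A := by
    intro x hx
    have hneg : -(A ∪ -A) = A ∪ -A := by
      ext y; simp [Set.mem_neg, or_comm]
    have : symmHull A = -(symmHull A) := by
      rw [symmHull, ← convexHull_neg, hneg]
    rw [this]
    exact Set.neg_mem_neg.mpr hx
  -- span of symmHull equals span of A
  have hspanP : Submodule.span ℝ (symmHull A) = Submodule.span ℝ A := by
    apply le_antisymm
    · rw [Submodule.span_le]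
      have hsub : symmHull A ⊆ (Submodule.span ℝ A : Set (EuclideanSpace ℝ (Fin D))) := by
        apply convexHull_min
        · rintro y (hy | hy)
          · exact Submodule.subset_span hy
          · rw [Set.mem_neg] at hy
            have := Submodule.subset_span (R := ℝ) hy
            simpa using Submodule.neg_mem _ this
        · exact Submodule.convex _
      exact hsub
    · exact Submodule.span_mono fun y hy =>
        subset_convexHull ℝ _ (Set.mem_union_left _ hy)
  have hw' : w ∈ Submodule.span ℝ (symmHull A) := by
    rw [hspanP, hA, hspan]; exact hw
  -- scaled w belongs to the hull, for any admissible inradius radius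
  set Sset : Set ℝ := {r : ℝ | 0 ≤ r ∧ ∃ c ∈ Submodule.span ℝ (symmHull A),
    ∀ y ∈ Submodule.span ℝ (symmHull A), ‖y - c‖ ≤ r → y ∈ symmHull A} with hSset
  have hkey : ∀ r' ∈ Sset, r' • w ∈ symmHull A := by
    rintro r' ⟨hr0, c, hc, hball⟩
    have h1 : c + r' • w ∈ symmHull A := by
      refine hball _ (Submodule.add_mem _ hc (Submodule.smul_mem _ _ hw')) ?_
      simp [norm_smul, abs_of_nonneg hr0, hwn]
    have h2 : c - r' • w ∈ symmHull A := by
      refine hball _ (Submodule.sub_mem _ hc (Submodule.smul_mem _ _ hw')) ?_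
      simp [norm_smul, abs_of_nonneg hr0, hwn]
    have h3 : -(c - r' • w) ∈ symmHull A := hPsymm _ h2
    have hmid : (1/2 : ℝ) • (c + r' • w) + (1/2 : ℝ) • (-(c - r' • w)) ∈ symmHull A :=
      (convex_convexHull ℝ _) h1 h3 (by norm_num) (by norm_num) (by norm_num)
    have heq : (1/2 : ℝ) • (c + r' • w) + (1/2 : ℝ) • (-(c - r' • w)) = r' • w := by
      module
    rwa [heq] at hmid
  -- the coefficient sum is positive
  have hsum_pos : 0 < ∑ m, |ch m| := by
    rcases hchnonneg.lt_or_eq with h | h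
    · exact h
    · exfalso
      have hall : ∀ m ∈ Finset.univ, |ch m| = 0 :=
        (Finset.sum_eq_zero_iff_of_nonneg fun m _ => abs_nonneg _).mp h.symm
      have hz : w = 0 := by
        rw [hrep]
        apply Finset.sum_eq_zero
        intro m hm
        rw [abs_eq_zero.mp (hall m hm), zero_smul]
      rw [hz] at hwn; simp at hwn
  -- every admissible radius r' satisfies r' * Σ|ch| ≤ 1
  have helem : ∀ r' ∈ Sset, r' * ∑ m, |ch m| ≤ 1 := by
    intro r' hr'
    have hr0 : 0 ≤ r' := hr'.1
    rcases hr0.lt_or_eq with hpos | hzero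
    · have hmem := hkey r' hr'
      obtain ⟨c, hcrep, hc1⟩ := hTsub hmem
      have hwrep : w = ∑ m, (r'⁻¹ * c m) • a m := by
        have h := congrArg (fun v => r'⁻¹ • v) hcrep
        simp only [Finset.smul_sum, smul_smul] at h
        rwa [inv_mul_cancel₀ hpos.ne', one_smul] at h
      have hle := hmin _ hwrep
      calc r' * ∑ m, |ch m| ≤ r' * ∑ m, |r'⁻¹ * c m| :=
            mul_le_mul_of_nonneg_left hle hr0
        _ = r' * (r'⁻¹ * ∑ m, |c m|) := by
            congr 1
            rw [Finset.mul_sum]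
            exact Finset.sum_congr rfl fun m _ => by
              rw [abs_mul, abs_of_nonneg (inv_nonneg.mpr hr0)]
        _ = ∑ m, |c m| := by
            rw [← mul_assoc, mul_inv_cancel₀ hpos.ne', one_mul]
        _ ≤ 1 := hc1
    · rw [← hzero, zero_mul]; exact zero_le_one
  -- Sset is nonempty
  have hSne : Sset.Nonempty := by
    by_contra h
    rw [Set.not_nonempty_iff_eq_empty] at h
    have : inradius (symmHull A) = 0 := by
      rw [inradius, ← hSset, h, Real.sSup_empty]
    rw [hA] at this
    rw [this] at hinr
    exact lt_irrefl _ hinr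
  have hriS : inradius (symmHull A) = sSup Sset := by rw [inradius, hSset]
  have hsle : sSup Sset ≤ (∑ m, |ch m|)⁻¹ := by
    apply Real.sSup_le
    · intro r' hr'
      rw [← one_div, le_div_iff₀ hsum_pos]
      exact helem r' hr'
    · positivity
  have hri_pos : 0 < inradius (symmHull A) := by rw [hA]; exact hinr
  -- conclude
  rw [div_eq_mul_inv]
  apply mul_le_mul_of_nonneg_left _ hμnonneg
  rw [← one_div, le_div_iff₀ hri_pos, mul_comm]
  calc inradius (symmHull A) * ∑ m, |ch m| ≤ (∑ m, |ch m|)⁻¹ * ∑ m, |ch m| := by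
        rw [hriS]
        exact mul_le_mul_of_nonneg_right hsle hchnonneg
    _ = 1 := inv_mul_cancel₀ hsum_pos.ne'

end SSCOMP
end
end
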